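/- Let I = (-1,1), β₀ > -1, -1 < β ≤ β₀, and p ≥ 1 a natural number. There exists a polynomial g of degree at most p with g(1) = 0, g(-1) = 1, and (∫_I g(x)² (1-x²)^β dx)^{1/2} ≤ C Γ(β+1) (p+1)^{-(1+β)}, where C = C(β₀) is independent of p and β. -/

import Mathlib

open Polynomial Real
open MeasureTheory

set_option maxHeartbeats 1000000

open Polynomial Real

lemma abs_sin_nat_mul_le (n : ℕ) (x : ℝ) : |Real.sin (n * x)| ≤ n * |Real.sin x| := by
  induction n with
  | zero => simp
  | succ n ih =>
    have : ((n:ℝ)+1) * x = n * x + x := by ring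
    rw [Nat.cast_succ, this, Real.sin_add]
    calc |Real.sin (n*x) * Real.cos x + Real.cos (n*x) * Real.sin x|
        ≤ |Real.sin (n*x) * Real.cos x| + |Real.cos (n*x) * Real.sin x| := abs_add_le _ _
      _ ≤ |Real.sin (n*x)| * 1 + 1 * |Real.sin x| := by
          rw [abs_mul, abs_mul]
          gcongr <;> first | exact Real.abs_cos_le_one x | exact Real.abs_cos_le_one _
      _ ≤ n * |Real.sin x| + 1 * |Real.sin x| := by rw [mul_one]; gcongr
      _ = ((n:ℝ)+1) * |Real.sin x| := by ring

lemma U_eval_one (n : ℕ) : (Polynomial.Chebyshev.U ℝ n).eval 1 = n + 1 := by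
  induction n using Nat.strong_induction_on with
  | _ n ih =>
    match n with
    | 0 => simp [Polynomial.Chebyshev.U_zero]
    | 1 => simp [Polynomial.Chebyshev.U_one]; norm_num
    | (m+2) =>
      have h2 : ((m:ℤ)+2) = ((m:ℤ)) + 2 := by ring
      have := Polynomial.Chebyshev.U_add_two ℝ m
      rw [show ((m+2:ℕ):ℤ) = (m:ℤ)+2 by push_cast; ring, this]
      have h0 := ih m (by omega)
      have h1 := ih (m+1) (by omega)
      rw [show ((m+1:ℕ):ℤ) = (m:ℤ)+1 by push_cast; ring] at h1
      simp only [eval_sub, eval_mul, eval_ofNat, eval_X, h0, h1]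
      push_cast
      ring

lemma natDegree_T_le (n : ℕ) : (Polynomial.Chebyshev.T ℝ n).natDegree ≤ n := by
  induction n using Nat.strong_induction_on with
  | _ n ih =>
    match n with
    | 0 => simp [Polynomial.Chebyshev.T_zero]
    | 1 => simp [Polynomial.Chebyshev.T_one]
    | (m+2) =>
      have := Polynomial.Chebyshev.T_add_two ℝ m
      rw [show ((m+2:ℕ):ℤ) = (m:ℤ)+2 by push_cast; ring, this]
      have h0 := ih m (by omega)
      have h1 := ih (m+1) (by omega)
      rw [show ((m+1:ℕ):ℤ) = (m:ℤ)+1 by push_cast; ring] at h1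
      refine le_trans (natDegree_sub_le _ _) ?_
      refine max_le (le_trans (natDegree_mul_le) ?_) (by omega)
      refine le_trans (add_le_add (natDegree_mul_le) h1) ?_
      simp [natDegree_X]
      omega

noncomputable def Qpoly (m : ℕ) : Polynomial ℝ :=
  (1 - (Polynomial.Chebyshev.T ℝ m).comp (-X)) /ₘ (X + 1)

lemma T_eval_one (n : ℤ) : (Polynomial.Chebyshev.T ℝ n).eval 1 = 1 := by
  have := Polynomial.Chebyshev.T_real_cos 0 n
  simpa using this

lemma Qpoly_spec (m : ℕ) :
    (X + 1) * Qpoly m = 1 - (Polynomial.Chebyshev.T ℝ m).comp (-X) := by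
  have hr : IsRoot (1 - (Polynomial.Chebyshev.T ℝ m).comp (-X)) (-1) := by
    simp [IsRoot, eval_comp, T_eval_one]
  have := (Polynomial.mul_divByMonic_eq_iff_isRoot (p := 1 - (Polynomial.Chebyshev.T ℝ m).comp (-X)) (a := (-1:ℝ))).2 hr
  rw [Qpoly]
  rw [show (X + 1 : Polynomial ℝ) = X - C (-1) by simp, this]

lemma Qpoly_eval (m : ℕ) (x : ℝ) (hx : x ≠ -1) :
    (Qpoly m).eval x = (1 - (Polynomial.Chebyshev.T ℝ m).eval (-x)) / (1 + x) := by
  have := congrArg (Polynomial.eval x) (Qpoly_spec m)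
  simp only [eval_mul, eval_add, eval_X, eval_one, eval_sub, eval_comp, eval_neg] at this
  have hx1 : x + 1 ≠ 0 := by intro h; apply hx; linarith
  field_simp [show (1:ℝ) + x = x + 1 by ring]
  rw [eq_div_iff (by rwa [add_comm] : (1:ℝ)+x ≠ 0)]; linear_combination this

lemma Qpoly_natDegree_le (m : ℕ) : (Qpoly m).natDegree ≤ m - 1 := by
  by_cases hQ : Qpoly m = 0
  · simp [hQ]
  have h1 : ((X + 1 : Polynomial ℝ) * Qpoly m).natDegree = 1 + (Qpoly m).natDegree := by
    rw [mul_comm]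
    rw [natDegree_mul hQ (by exact X_add_C_ne_zero (1:ℝ))]
    have : (X + 1 : Polynomial ℝ).natDegree = 1 := by
      simpa using natDegree_X_add_C (1:ℝ)
    rw [this]; ring
  have h2 : ((1 : Polynomial ℝ) - (Polynomial.Chebyshev.T ℝ m).comp (-X)).natDegree ≤ m := by
    refine le_trans (natDegree_sub_le _ _) (max_le (by simp) ?_)
    rw [natDegree_comp]
    have : (-X : Polynomial ℝ).natDegree = 1 := by simp
    rw [this, mul_one]
    exact natDegree_T_le m
  rw [Qpoly_spec m] at h1
  omega

lemma Qpoly_eval_neg_one (m : ℕ) (hm : 1 ≤ m) : (Qpoly m).eval (-1) = (m:ℝ)^2 := by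
  have h := congrArg Polynomial.derivative (Qpoly_spec m)
  rw [derivative_mul, derivative_sub, derivative_one, derivative_comp] at h
  have h' := congrArg (Polynomial.eval (-1:ℝ)) h
  simp only [eval_add, eval_mul, eval_X, eval_one, derivative_add, derivative_X,
    derivative_one, add_zero, eval_sub, eval_comp, eval_neg, derivative_neg,
    zero_sub, eval_zero] at h'
  have hT : (Polynomial.derivative (Polynomial.Chebyshev.T ℝ m)).eval 1 = (m:ℝ)^2 := by
    rw [Polynomial.Chebyshev.T_derivative_eq_U]
    have : ((m:ℤ) - 1) = ((m - 1 : ℕ) : ℤ) := by omega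
    rw [this]
    simp only [eval_mul, eval_intCast, U_eval_one]
    have : ((m-1:ℕ):ℝ) = (m:ℝ) - 1 := by
      have : (1:ℕ) ≤ m := hm
      push_cast [this]
      ring
    rw [this]
    push_cast
    ring
  -- h' : eval(-1) of (1*Q + (X+1)*Q') = eval(-1) of RHS derivative
  simp only [derivative_one, zero_sub, neg_neg] at h'
  rw [hT] at h'
  linarith [h']

lemma Qpoly_bounds (m : ℕ) {x : ℝ} (hx : x ∈ Set.Ioo (-1:ℝ) 1) :
    0 ≤ (Qpoly m).eval x ∧ (Qpoly m).eval x ≤ (m:ℝ)^2 ∧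
      (Qpoly m).eval x * (1+x) ≤ 2 := by
  obtain ⟨hx1, hx2⟩ := hx
  have hx1' : (1:ℝ) + x > 0 := by linarith
  set θ := Real.arccos (-x) with hθ
  have hcos : Real.cos θ = -x := Real.cos_arccos (by linarith) (by linarith)
  have hT : (Polynomial.Chebyshev.T ℝ m).eval (-x) = Real.cos (m * θ) := by
    rw [← hcos]
    exact_mod_cast Polynomial.Chebyshev.T_real_cos θ m
  have hQ : (Qpoly m).eval x = (1 - Real.cos (m*θ)) / (1+x) := by
    rw [Qpoly_eval m x (by intro h; rw [h] at hx1; exact lt_irrefl _ hx1), hT]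
  have h1x : 1 + x = 2 * Real.sin (θ/2)^2 := by
    have := Real.sin_sq_eq_half_sub (θ/2)
    rw [show 2 * (θ/2) = θ by ring] at this
    rw [hcos] at this
    linarith
  have hnum : 1 - Real.cos (m*θ) = 2 * Real.sin (m*(θ/2))^2 := by
    have := Real.sin_sq_eq_half_sub (m*(θ/2))
    rw [show 2 * ((m:ℝ)*(θ/2)) = m*θ by ring] at this
    linarith
  have hnum0 : 0 ≤ 1 - Real.cos (m*θ) := by
    have := Real.cos_le_one ((m:ℝ)*θ); linarith
  have hnum2 : 1 - Real.cos (m*θ) ≤ 2 := by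
    have := Real.neg_one_le_cos ((m:ℝ)*θ); linarith
  have hsin : Real.sin (m*(θ/2))^2 ≤ (m:ℝ)^2 * Real.sin (θ/2)^2 := by
    have h := abs_sin_nat_mul_le m (θ/2)
    have h' : |Real.sin ((m:ℝ)*(θ/2))|^2 ≤ ((m:ℝ) * |Real.sin (θ/2)|)^2 := by
      have hnn : (0:ℝ) ≤ |Real.sin ((m:ℝ)*(θ/2))| := abs_nonneg _
      exact pow_le_pow_left₀ hnn h 2
    rw [sq_abs] at h'
    calc Real.sin ((m:ℝ)*(θ/2))^2 ≤ ((m:ℝ) * |Real.sin (θ/2)|)^2 := h'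
      _ = (m:ℝ)^2 * Real.sin (θ/2)^2 := by rw [mul_pow, sq_abs]
  refine ⟨?_, ?_, ?_⟩
  · rw [hQ]; positivity
  · rw [hQ, div_le_iff₀ hx1']
    rw [hnum, h1x]
    nlinarith [hsin]
  · rw [hQ, div_mul_cancel₀ _ (by linarith : (1:ℝ)+x ≠ 0)]
    exact hnum2

noncomputable def gpoly (k m : ℕ) : Polynomial ℝ :=
  Polynomial.C (1/2) * (1 - X) * (Polynomial.C (1/(m:ℝ)^2) * Qpoly m)^k

lemma gpoly_eval_one (k m : ℕ) : (gpoly k m).eval 1 = 0 := by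
  simp [gpoly]

lemma gpoly_eval_neg_one (k m : ℕ) (hm : 1 ≤ m) : (gpoly k m).eval (-1) = 1 := by
  have hm' : ((m:ℝ))^2 ≠ 0 := by positivity
  simp [gpoly, Qpoly_eval_neg_one m hm, hm']
  norm_num

lemma gpoly_natDegree_le (k m : ℕ) : (gpoly k m).natDegree ≤ 1 + k * (m-1) := by
  refine le_trans natDegree_mul_le ?_
  have h1 : (Polynomial.C (1/2) * (1 - X) : Polynomial ℝ).natDegree ≤ 1 := by
    refine le_trans natDegree_mul_le ?_
    simp [natDegree_C]
    exact le_trans (natDegree_sub_le _ _) (by simp)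
  have h2 : ((Polynomial.C (1/(m:ℝ)^2) * Qpoly m)^k).natDegree ≤ k * (m-1) := by
    refine le_trans (natDegree_pow_le) ?_
    have : (Polynomial.C (1/(m:ℝ)^2) * Qpoly m).natDegree ≤ m - 1 := by
      refine le_trans natDegree_mul_le ?_
      simp [natDegree_C, Qpoly_natDegree_le m]
    exact Nat.mul_le_mul_left k this
  omega

lemma gpoly_eval_eq (k m : ℕ) (x : ℝ) :
    (gpoly k m).eval x = (1-x)/2 * ((Qpoly m).eval x / (m:ℝ)^2)^k := by
  simp [gpoly, div_eq_mul_inv]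
  ring

lemma f_le_H (β β₀ : ℝ) (hβ : -1 < β) (hββ₀ : β ≤ β₀) (k m : ℕ) (hm : 1 ≤ m)
    {x : ℝ} (hx : x ∈ Set.Ioo (-1:ℝ) 1) :
    ((gpoly k m).eval x)^2 * (1-x^2)^β ≤
      (2:ℝ)^β₀ * (if 1+x ≤ 2/(m:ℝ)^2 then (1+x)^β
        else (2/(m:ℝ)^2)^(2*k) * (1+x)^(β - 2*k)) := by
  obtain ⟨hx1, hx2⟩ := hx
  have hm2 : (0:ℝ) < (m:ℝ)^2 := by positivity
  have h1x : (0:ℝ) < 1 + x := by linarith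
  have h1x' : (0:ℝ) < 1 - x := by linarith
  obtain ⟨hQ0, hQ1, hQ2⟩ := Qpoly_bounds m ⟨hx1, hx2⟩
  set q : ℝ := (Qpoly m).eval x / (m:ℝ)^2 with hqdef
  have hq0 : 0 ≤ q := by positivity
  have hq1 : q ≤ 1 := by rw [hqdef, div_le_one hm2]; exact hQ1
  have hq2 : q * (1+x) ≤ 2/(m:ℝ)^2 := by
    rw [hqdef, div_mul_eq_mul_div, div_le_div_iff₀ hm2 hm2]
    calc (Qpoly m).eval x * (1+x) * (m:ℝ)^2 ≤ 2 * (m:ℝ)^2 := by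
          exact mul_le_mul_of_nonneg_right hQ2 (le_of_lt hm2)
      _ = 2 * (m:ℝ)^2 := rfl
  have hg : ((gpoly k m).eval x)^2 = (1-x)^2/4 * q^(2*k) := by
    rw [gpoly_eval_eq]
    rw [← hqdef]
    rw [mul_pow, ← pow_mul, div_pow]
    ring_nf
  have hsplit : (1-x^2)^β = (1-x)^β * (1+x)^β := by
    rw [show (1:ℝ) - x^2 = (1-x)*(1+x) by ring]
    exact Real.mul_rpow h1x'.le h1x.le
  have hA : (1-x)^2/4 * (1-x)^β ≤ (2:ℝ)^β := by
    have e1 : (1-x)^2/4 * (1-x)^β = (1-x)^(β+2) / 4 := by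
      rw [Real.rpow_add h1x', Real.rpow_two]
      ring
    rw [e1]
    have e2 : (1-x)^(β+2) ≤ (2:ℝ)^(β+2) :=
      Real.rpow_le_rpow h1x'.le (by linarith) (by linarith)
    have e3 : (2:ℝ)^(β+2) = 4 * (2:ℝ)^β := by
      rw [Real.rpow_add (by norm_num : (0:ℝ)<2)]
      norm_num
      ring
    rw [div_le_iff₀ (by norm_num : (0:ℝ)<4)]
    rw [e3] at e2
    linarith
  have h2β : (2:ℝ)^β ≤ (2:ℝ)^β₀ := Real.rpow_le_rpow_of_exponent_le one_le_two hββ₀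
  have key : ((gpoly k m).eval x)^2 * (1-x^2)^β ≤ (2:ℝ)^β₀ * (q^(2*k) * (1+x)^β) := by
    rw [hg, hsplit]
    have hxpβ : (0:ℝ) ≤ (1+x)^β := Real.rpow_nonneg h1x.le β
    calc (1-x)^2/4 * q^(2*k) * ((1-x)^β * (1+x)^β)
        = ((1-x)^2/4 * (1-x)^β) * (q^(2*k) * (1+x)^β) := by ring
      _ ≤ (2:ℝ)^β * (q^(2*k) * (1+x)^β) := by
          exact mul_le_mul_of_nonneg_right hA (by positivity)
      _ ≤ (2:ℝ)^β₀ * (q^(2*k) * (1+x)^β) := by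
          exact mul_le_mul_of_nonneg_right h2β (by positivity)
  refine le_trans key ?_
  by_cases hcase : 1+x ≤ 2/(m:ℝ)^2
  · rw [if_pos hcase]
    have : q^(2*k) ≤ 1 := pow_le_one₀ hq0 hq1
    have hxpβ : (0:ℝ) ≤ (1+x)^β := Real.rpow_nonneg h1x.le β
    have h2β₀ : (0:ℝ) ≤ (2:ℝ)^β₀ := Real.rpow_nonneg (by norm_num) β₀
    nlinarith [mul_le_mul_of_nonneg_right this hxpβ]
  · rw [if_neg hcase]
    have h2β₀ : (0:ℝ) ≤ (2:ℝ)^β₀ := Real.rpow_nonneg (by norm_num) β₀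
    refine mul_le_mul_of_nonneg_left ?_ h2β₀
    have hδ : (0:ℝ) < 2/(m:ℝ)^2 := by positivity
    have hqle : q ≤ (2/(m:ℝ)^2) / (1+x) := by
      rw [le_div_iff₀ h1x]
      exact hq2
    have hrw : (1+x)^(β - 2*k) = (1+x)^β * ((1+x)^(2*k))⁻¹ := by
      rw [show β - 2*(k:ℝ) = β + (-(2*k:ℝ)) by ring, Real.rpow_add h1x,
        Real.rpow_neg h1x.le]
      congr 2
      rw [show ((2*k:ℝ)) = ((2*k : ℕ) : ℝ) by push_cast; ring, Real.rpow_natCast]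
    rw [hrw]
    have hxpβ : (0:ℝ) ≤ (1+x)^β := Real.rpow_nonneg h1x.le β
    calc q^(2*k) * (1+x)^β ≤ ((2/(m:ℝ)^2) / (1+x))^(2*k) * (1+x)^β := by
          exact mul_le_mul_of_nonneg_right (pow_le_pow_left₀ hq0 hqle _) hxpβ
      _ = (2/(m:ℝ)^2)^(2*k) * ((1+x)^β * ((1+x)^(2*k))⁻¹) := by
          rw [div_pow]
          field_simp

open MeasureTheory in
lemma one_add_rpow_integral (r c d : ℝ) (hcd : c ≤ d)
    (hcase : -1 < r ∨ (r ≠ -1 ∧ 0 < 1 + c)) :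
    IntegrableOn (fun x => (1+x)^r) (Set.Ioo c d) volume ∧
    ∫ x in Set.Ioo c d, (1+x)^r = ((1+d)^(r+1) - (1+c)^(r+1))/(r+1) := by
  have hii : IntervalIntegrable (fun t : ℝ => t ^ r) volume (c+1) (d+1) := by
    rcases hcase with h | ⟨h1, h2⟩
    · exact intervalIntegral.intervalIntegrable_rpow' h
    · refine intervalIntegral.intervalIntegrable_rpow (Or.inr ?_)
      intro h0
      rw [Set.mem_uIcc] at h0
      rcases h0 with ⟨h3, _⟩ | ⟨h3, _⟩ <;> linarith
  have hii' : IntervalIntegrable (fun x : ℝ => (1+x)^r) volume c d := by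
    have := hii.comp_add_right 1
    simpa [add_comm] using this
  constructor
  · exact hii'.1.mono_set Set.Ioo_subset_Ioc_self
  · rw [← integral_Ioc_eq_integral_Ioo, ← intervalIntegral.integral_of_le hcd]
    have e1 : (∫ x in c..d, (1+x)^r) = ∫ t in (c+1)..(d+1), t^r := by
      rw [← intervalIntegral.integral_comp_add_right (fun t => t^r) 1]
      congr 1
      ext x
      rw [add_comm]
    rw [e1, integral_rpow]
    · rw [show (1+d) = d+1 by ring, show (1+c) = c+1 by ring]
    · rcases hcase with h | ⟨h1, h2⟩
      · exact Or.inl h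
      · refine Or.inr ⟨h1, ?_⟩
        intro h0
        rw [Set.mem_uIcc] at h0
        rcases h0 with ⟨h3, _⟩ | ⟨h3, _⟩ <;> linarith

open MeasureTheory in
lemma H_integral (β : ℝ) (hβ : -1 < β) (k m : ℕ) (hm : 1 ≤ m) (hk : β + 1 < 2*(k:ℝ)) :
    IntegrableOn (fun x => if 1+x ≤ 2/(m:ℝ)^2 then (1+x)^β
        else (2/(m:ℝ)^2)^(2*k) * (1+x)^(β-2*k)) (Set.Ioo (-1:ℝ) 1) volume ∧
    (∫ x in Set.Ioo (-1:ℝ) 1, (if 1+x ≤ 2/(m:ℝ)^2 then (1+x)^β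
        else (2/(m:ℝ)^2)^(2*k) * (1+x)^(β-2*k)))
      ≤ (2/(m:ℝ)^2)^(β+1) * (1/(β+1) + 1/(2*(k:ℝ) - β - 1)) := by
  set δ : ℝ := 2/(m:ℝ)^2 with hδdef
  have hδ0 : 0 < δ := by positivity
  have hm1 : (1:ℝ) ≤ (m:ℝ) := by exact_mod_cast hm
  have hδ2 : δ ≤ 2 := by
    rw [hδdef, div_le_iff₀ (by positivity)]
    nlinarith
  set a : ℝ := -1 + δ with hadef
  have ha1 : (-1:ℝ) < a := by simp [hadef]; linarith
  have ha2 : a ≤ 1 := by simp [hadef]; linarith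
  set H : ℝ → ℝ := fun x => if 1+x ≤ δ then (1+x)^β else δ^(2*k) * (1+x)^(β-2*k)
    with hHdef
  have hβ1 : (0:ℝ) < β + 1 := by linarith
  have hγ : β - 2*(k:ℝ) < -1 := by linarith
  obtain ⟨hint1, hval1⟩ := one_add_rpow_integral β (-1) a ha1.le (Or.inl hβ)
  obtain ⟨hint2, hval2⟩ := one_add_rpow_integral (β - 2*(k:ℝ)) a 1 ha2
    (Or.inr ⟨by linarith, by simp [hadef]; linarith⟩)
  have h1a : 1 + a = δ := by rw [hadef]; ring
  -- EqOn facts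
  have heq1 : Set.EqOn (fun x => (1+x)^β) H (Set.Ioo (-1) a) := by
    intro x hx
    have : 1 + x ≤ δ := by have := hx.2; rw [hadef] at this; linarith
    simp [hHdef, this]
  have heq2 : Set.EqOn (fun x => δ^(2*k) * (1+x)^(β-2*(k:ℝ))) H (Set.Ioo a 1) := by
    intro x hx
    have : ¬ (1 + x ≤ δ) := by have := hx.1; rw [hadef] at this; push_neg; linarith
    simp only [hHdef, if_neg this]
  -- Integrability on pieces
  have hH1 : IntegrableOn H (Set.Ioo (-1) a) volume :=
    hint1.congr_fun heq1 measurableSet_Ioo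
  have hface : IntegrableOn (fun x => δ^(2*k) * (1+x)^(β-2*(k:ℝ))) (Set.Ioo a 1) volume :=
    hint2.const_mul _
  have hH2' : IntegrableOn H (Set.Ioo a 1) volume :=
    hface.congr_fun heq2 measurableSet_Ioo
  have hH2 : IntegrableOn H (Set.Ico a 1) volume :=
    hH2'.congr_set_ae Ioo_ae_eq_Ico.symm
  have hdisj : Disjoint (Set.Ioo (-1:ℝ) a) (Set.Ico a 1) := by
    rw [Set.disjoint_left]
    intro x hx1 hx2
    exact absurd hx2.1 (not_le.2 hx1.2)
  have hunion : Set.Ioo (-1:ℝ) a ∪ Set.Ico a 1 = Set.Ioo (-1:ℝ) 1 :=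
    Set.Ioo_union_Ico_eq_Ioo ha1 ha2
  constructor
  · rw [← hunion]
    exact hH1.union hH2
  · rw [← hunion, setIntegral_union hdisj measurableSet_Ico hH1 hH2]
    have hv1 : (∫ x in Set.Ioo (-1:ℝ) a, H x) = δ^(β+1) / (β+1) := by
      rw [← setIntegral_congr_fun measurableSet_Ioo heq1, hval1]
      rw [h1a, show (1:ℝ) + -1 = 0 by ring, Real.zero_rpow (by linarith : β+1 ≠ 0)]
      ring
    have hv2 : (∫ x in Set.Ico a 1, H x) ≤ δ^(β+1) / (2*(k:ℝ) - β - 1) := by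
      rw [integral_Ico_eq_integral_Ioo, ← setIntegral_congr_fun measurableSet_Ioo heq2]
      rw [MeasureTheory.integral_const_mul, hval2, h1a]
      have hpow : δ^(2*k) = δ^((2*k:ℕ):ℝ) := (Real.rpow_natCast δ (2*k)).symm
      have hneg : β - 2*(k:ℝ) + 1 < 0 := by linarith
      set γ : ℝ := β - 2*(k:ℝ) + 1 with hγdef
      have hc : (0:ℝ) < 2*(k:ℝ) - β - 1 := by linarith
      have e : ((1+1:ℝ)^γ - δ^γ)/γ = (δ^γ - (1+1:ℝ)^γ)/(2*(k:ℝ)-β-1) := by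
        rw [show γ = -(2*(k:ℝ)-β-1) by rw [hγdef]; ring]
        rw [div_neg_eq_neg_div]
        field_simp
        ring
      have h2γ : (0:ℝ) ≤ (1+1:ℝ)^γ := Real.rpow_nonneg (by norm_num) γ
      have hstep : ((1+1:ℝ)^γ - δ^γ)/γ ≤ δ^γ/(2*(k:ℝ) - β - 1) := by
        rw [e]
        gcongr
        linarith
      calc δ^(2*k) * (((1+1:ℝ)^γ - δ^γ)/γ)
          ≤ δ^(2*k) * (δ^γ/(2*(k:ℝ) - β - 1)) := by
            exact mul_le_mul_of_nonneg_left hstep (by positivity)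
        _ = δ^(β+1) / (2*(k:ℝ) - β - 1) := by
            rw [← Real.rpow_natCast δ (2*k), ← mul_div_assoc, ← Real.rpow_add hδ0]
            congr 2
            push_cast
            rw [hγdef]
            ring
    calc (∫ x in Set.Ioo (-1:ℝ) a, H x) + ∫ x in Set.Ico a 1, H x
        ≤ δ^(β+1)/(β+1) + δ^(β+1)/(2*(k:ℝ) - β - 1) := by
          rw [hv1]; exact add_le_add_right hv2 _
      _ = δ^(β+1) * (1/(β+1) + 1/(2*(k:ℝ) - β - 1)) := by ring

open MeasureTheory in
lemma Gamma_ge_exp_neg_one {s : ℝ} (hs : 1 ≤ s) : Real.exp (-1) ≤ Real.Gamma s := by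
  have hs0 : 0 < s := by linarith
  rw [Real.Gamma_eq_integral hs0]
  have hconv : IntegrableOn (fun x => Real.exp (-x) * x ^ (s-1)) (Set.Ioi 0) volume :=
    Real.GammaIntegral_convergent hs0
  have hconv1 : IntegrableOn (fun x => Real.exp (-x) * x ^ (s-1)) (Set.Ioi 1) volume :=
    hconv.mono_set (Set.Ioi_subset_Ioi (by norm_num))
  have hexp : IntegrableOn (fun x : ℝ => Real.exp (-x)) (Set.Ioi 1) volume := by
    have := exp_neg_integrableOn_Ioi 1 (b := 1) one_pos
    simpa using this
  have step1 : (∫ x in Set.Ioi (1:ℝ), Real.exp (-x))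
      ≤ ∫ x in Set.Ioi (1:ℝ), Real.exp (-x) * x ^ (s-1) := by
    refine setIntegral_mono_on hexp hconv1 measurableSet_Ioi ?_
    intro x hx
    have hx1 : (1:ℝ) ≤ x := le_of_lt hx
    have h1 : (1:ℝ) ≤ x ^ (s-1) := by
      have := Real.rpow_le_rpow_of_exponent_le hx1 (by linarith : (0:ℝ) ≤ s-1)
      rwa [Real.rpow_zero] at this
    nlinarith [Real.exp_pos (-x)]
  have step2 : (∫ x in Set.Ioi (1:ℝ), Real.exp (-x) * x ^ (s-1))
      ≤ ∫ x in Set.Ioi (0:ℝ), Real.exp (-x) * x ^ (s-1) := by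
    refine setIntegral_mono_set hconv ?_ ?_
    · filter_upwards [MeasureTheory.ae_restrict_mem measurableSet_Ioi] with x hx
      have : (0:ℝ) < x := hx
      positivity
    · filter_upwards with x hx
      exact lt_trans one_pos hx
  calc Real.exp (-1) = ∫ x in Set.Ioi (1:ℝ), Real.exp (-x) := (integral_exp_neg_Ioi 1).symm
    _ ≤ _ := le_trans step1 step2


/-- Existence of a polynomial g with g(1)=0, g(-1)=1 and small weighted L² norm. -/
theorem exists_cutoff_polynomial (β₀ : ℝ) (hβ₀ : -1 < β₀) :
    ∃ C : ℝ, 0 < C ∧ ∀ β : ℝ, -1 < β → β ≤ β₀ → ∀ p : ℕ, 1 ≤ p →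
      ∃ g : Polynomial ℝ, g.natDegree ≤ p ∧ g.eval 1 = 0 ∧ g.eval (-1) = 1 ∧
        Real.sqrt (∫ x in Set.Ioo (-1 : ℝ) 1, (g.eval x) ^ 2 * (1 - x^2) ^ β) ≤
          C * Real.Gamma (β + 1) * ((p : ℝ) + 1) ^ (-(1 + β)) := by
  set k : ℕ := ⌈β₀⌉₊ + 1 with hkdef
  have hk1 : 1 ≤ k := Nat.le_add_left 1 _
  have hkβ : β₀ + 1 ≤ (k:ℝ) := by
    have := Nat.le_ceil β₀
    rw [hkdef]
    push_cast
    linarith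
  have hkpos : (0:ℝ) < (k:ℝ) := by linarith
  set A : ℝ := 2*(6*(k:ℝ))^2 with hAdef
  have hk1' : (1:ℝ) ≤ (k:ℝ) := by exact_mod_cast hk1
  have hA1 : (1:ℝ) ≤ A := by rw [hAdef]; nlinarith [hk1']
  have hβ₀1 : (0:ℝ) < β₀ + 1 := by linarith
  set C : ℝ := Real.sqrt ((2:ℝ)^(β₀+1) * A^(β₀+1) * (β₀+1)) * Real.exp 1 with hCdef
  have hargpos : (0:ℝ) < (2:ℝ)^(β₀+1) * A^(β₀+1) * (β₀+1) := by
    have h2 : (0:ℝ) < (2:ℝ)^(β₀+1) := Real.rpow_pos_of_pos (by norm_num) _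
    have hA : (0:ℝ) < A^(β₀+1) := Real.rpow_pos_of_pos (by linarith) _
    positivity
  have hC : 0 < C := by
    rw [hCdef]
    exact mul_pos (Real.sqrt_pos.2 hargpos) (Real.exp_pos 1)
  refine ⟨C, hC, ?_⟩
  intro β hβ hββ₀ p hp
  have hβ1 : (0:ℝ) < β + 1 := by linarith
  -- choice of m
  set m : ℕ := (p-1)/(2*k) + 1 with hmdef
  have hm : 1 ≤ m := Nat.le_add_left 1 _
  obtain ⟨hdeg, hmp⟩ : 1 + k*(m-1) ≤ p ∧ p + 1 ≤ 6*k*m := by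
    set q : ℕ := (p-1)/(2*k) with hqdef
    set r : ℕ := (p-1)%(2*k) with hrdef
    have h1 : 2*k*q + r = p - 1 := Nat.div_add_mod (p-1) (2*k)
    have h2 : r < 2*k := Nat.mod_lt (p-1) (by omega : 0 < 2*k)
    have hm1 : m - 1 = q := by omega
    have hmq : m = q + 1 := rfl
    rw [hm1, hmq]
    have hkq : k*q ≤ 2*(k*q) := by omega
    have h1' : 2*(k*q) + r = p - 1 := by rw [← h1]; ring_nf
    constructor
    · omega
    · have expand : 6*k*(q+1) = 6*(k*q) + 6*k := by ring
      omega
  have hmp' : (p:ℝ) + 1 ≤ 6*(k:ℝ)*(m:ℝ) := by exact_mod_cast hmp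
  have hmpos : (0:ℝ) < (m:ℝ) := by exact_mod_cast hm
  have hk2 : β + 1 < 2*(k:ℝ) := by linarith
  refine ⟨gpoly k m, le_trans (gpoly_natDegree_le k m) hdeg, gpoly_eval_one k m,
    gpoly_eval_neg_one k m hm, ?_⟩
  obtain ⟨hHint, hHval⟩ := H_integral β hβ k m hm hk2
  set δ : ℝ := 2/(m:ℝ)^2 with hδdef
  have hδ0 : 0 < δ := by positivity
  set H : ℝ → ℝ := fun x => if 1+x ≤ 2/(m:ℝ)^2 then (1+x)^β
      else (2/(m:ℝ)^2)^(2*k) * (1+x)^(β-2*(k:ℝ)) with hHdef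
  set t : ℝ := (p:ℝ) + 1 with htdef
  have ht : (0:ℝ) < t := by rw [htdef]; positivity
  set G : ℝ := Real.Gamma (β+1) with hGdef
  have hGpos : 0 < G := Real.Gamma_pos_of_pos hβ1
  -- Step A : E ≤ 2^β₀ * ∫ H
  have stepA : (∫ x in Set.Ioo (-1:ℝ) 1, ((gpoly k m).eval x)^2 * (1-x^2)^β)
      ≤ (2:ℝ)^β₀ * ∫ x in Set.Ioo (-1:ℝ) 1, H x := by
    rw [← MeasureTheory.integral_const_mul]
    refine integral_mono_of_nonneg ?_ ?_ ?_
    · refine ae_restrict_of_forall_mem measurableSet_Ioo ?_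
      intro x hx
      have : (0:ℝ) < 1 - x^2 := by
        obtain ⟨h1, h2⟩ := hx
        nlinarith
      positivity
    · exact hHint.const_mul _
    · refine ae_restrict_of_forall_mem measurableSet_Ioo ?_
      intro x hx
      exact f_le_H β β₀ hβ hββ₀ k m hm hx
  -- Step B
  have hsum : 1/(β+1) + 1/(2*(k:ℝ) - β - 1) ≤ 2/(β+1) := by
    have h1 : β + 1 ≤ 2*(k:ℝ) - β - 1 := by linarith
    have h2 : 1/(2*(k:ℝ) - β - 1) ≤ 1/(β+1) := by
      apply one_div_le_one_div_of_le hβ1 h1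
    have h3 : 2/(β+1) = 1/(β+1) + 1/(β+1) := by ring
    linarith
  have stepB : (∫ x in Set.Ioo (-1:ℝ) 1, H x) ≤ δ^(β+1) * (2/(β+1)) := by
    refine le_trans hHval ?_
    have hδp : (0:ℝ) ≤ δ^(β+1) := (Real.rpow_pos_of_pos hδ0 _).le
    exact mul_le_mul_of_nonneg_left hsum hδp
  -- Step C/D : δ^(β+1) ≤ A^(β₀+1) * t^(-(2*(β+1)))
  have stepC : δ ≤ A / t^2 := by
    rw [hδdef, hAdef, div_le_div_iff₀ (by positivity) (by positivity)]
    nlinarith [hmp', sq_nonneg ((m:ℝ) - t/(6*(k:ℝ)))]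
  have stepD : δ^(β+1) ≤ A^(β₀+1) * t^(-(2*(β+1))) := by
    have h1 : δ^(β+1) ≤ (A/t^2)^(β+1) :=
      Real.rpow_le_rpow hδ0.le stepC (by linarith)
    have h2 : (A/t^2)^(β+1) = A^(β+1) * (t^2)^(-(β+1)) := by
      rw [div_eq_mul_inv, Real.mul_rpow (by linarith) (by positivity)]
      congr 1
      rw [← Real.rpow_neg_one, ← Real.rpow_natCast t 2]
      rw [← Real.rpow_mul ht.le, ← Real.rpow_mul ht.le, ← Real.rpow_mul ht.le]
      congr 1
      push_cast
      ring
    have h3 : (t^2 : ℝ)^(-(β+1)) = t^(-(2*(β+1))) := by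
      rw [← Real.rpow_natCast t 2, ← Real.rpow_mul ht.le]
      congr 1
      push_cast
      ring
    have h4 : A^(β+1) ≤ A^(β₀+1) :=
      Real.rpow_le_rpow_of_exponent_le hA1 (by linarith)
    have h5 : (0:ℝ) ≤ t^(-(2*(β+1))) := (Real.rpow_pos_of_pos ht _).le
    calc δ^(β+1) ≤ A^(β+1) * (t^2)^(-(β+1)) := by rw [← h2]; exact h1
      _ = A^(β+1) * t^(-(2*(β+1))) := by rw [h3]
      _ ≤ A^(β₀+1) * t^(-(2*(β+1))) := mul_le_mul_of_nonneg_right h4 h5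
  -- Step E : 1/(β+1) ≤ (β₀+1) * e² * G²
  have stepE : 1/(β+1) ≤ (β₀+1) * (Real.exp 1)^2 * G^2 := by
    have hΓ2 : Real.Gamma (β+2) = (β+1) * G := by
      rw [hGdef, show β+2 = (β+1)+1 by ring]
      exact Real.Gamma_add_one (by linarith)
    have hΓ : Real.exp (-1) ≤ (β+1) * G := by
      rw [← hΓ2]
      exact Gamma_ge_exp_neg_one (by linarith)
    have he : Real.exp (-1) * Real.exp 1 = 1 := by
      rw [← Real.exp_add]; norm_num
    have he1 : (0:ℝ) < Real.exp 1 := Real.exp_pos 1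
    have hkey : 1 ≤ (β+1) * G * Real.exp 1 := by
      calc (1:ℝ) = Real.exp (-1) * Real.exp 1 := he.symm
        _ ≤ (β+1) * G * Real.exp 1 := mul_le_mul_of_nonneg_right hΓ he1.le
    rw [div_le_iff₀ hβ1]
    nlinarith [sq_nonneg ((β+1)*G*Real.exp 1 - 1), mul_pos hβ1 hGpos]
  -- Collect
  have hE : (∫ x in Set.Ioo (-1:ℝ) 1, ((gpoly k m).eval x)^2 * (1-x^2)^β)
      ≤ (C * G * t^(-(1+β)))^2 := by
    have hC2 : C^2 = (2:ℝ)^(β₀+1) * A^(β₀+1) * (β₀+1) * (Real.exp 1)^2 := by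
      rw [hCdef, mul_pow, Real.sq_sqrt hargpos.le]
    have h2e : (2:ℝ)^β₀ * 2 = (2:ℝ)^(β₀+1) := by
      rw [Real.rpow_add_one (by norm_num : (2:ℝ) ≠ 0)]
    have ht2 : (t^(-(1+β)))^2 = t^(-(2*(β+1))) := by
      rw [← Real.rpow_natCast (t^(-(1+β))) 2, ← Real.rpow_mul ht.le]
      congr 1
      push_cast
      ring
    have hδnn : (0:ℝ) ≤ δ^(β+1) := (Real.rpow_pos_of_pos hδ0 _).le
    have h2β₀ : (0:ℝ) < (2:ℝ)^β₀ := Real.rpow_pos_of_pos (by norm_num) _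
    have htneg : (0:ℝ) < t^(-(2*(β+1))) := Real.rpow_pos_of_pos ht _
    have hAp : (0:ℝ) < A^(β₀+1) := Real.rpow_pos_of_pos (by linarith) _
    calc (∫ x in Set.Ioo (-1:ℝ) 1, ((gpoly k m).eval x)^2 * (1-x^2)^β)
        ≤ (2:ℝ)^β₀ * (δ^(β+1) * (2/(β+1))) :=
          le_trans stepA (mul_le_mul_of_nonneg_left stepB h2β₀.le)
      _ = ((2:ℝ)^β₀ * 2) * δ^(β+1) * (1/(β+1)) := by ring
      _ ≤ ((2:ℝ)^β₀ * 2) * (A^(β₀+1) * t^(-(2*(β+1)))) * ((β₀+1) * (Real.exp 1)^2 * G^2) := by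
          have hpos : (0:ℝ) < (2:ℝ)^β₀ * 2 := by positivity
          refine mul_le_mul ?_ stepE (by positivity) (by positivity)
          exact mul_le_mul_of_nonneg_left stepD hpos.le
      _ = (C^2) * G^2 * (t^(-(1+β)))^2 := by
          rw [hC2, ← h2e, ht2]
          ring
      _ = (C * G * t^(-(1+β)))^2 := by ring
  have hrhs : (0:ℝ) ≤ C * G * t^(-(1+β)) := by
    have := Real.rpow_pos_of_pos ht (-(1+β))
    positivity
  calc Real.sqrt (∫ x in Set.Ioo (-1:ℝ) 1, ((gpoly k m).eval x)^2 * (1-x^2)^β)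
      ≤ Real.sqrt ((C * G * t^(-(1+β)))^2) := Real.sqrt_le_sqrt hE
    _ = C * G * t^(-(1+β)) := by rw [Real.sqrt_sq hrhs]
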